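/- Let F be a field and let L be a 2-dimensional subspace of F^6 such that q(v) ≠ 0 for every nonzero v ∈ L, where q is the Klein quadratic form, and let L^⊥ = {w ∈ F^6 : B(w,v) = 0 for all v ∈ L}. Let S be the set of 2-dimensional subspaces W of F^4 such that the Plücker vector p(a,b) of some (equivalently any) basis (a,b) of W lies in L^⊥. Then S is a spread of lines: (i) any two distinct members of S intersect only in {0}, and (ii) every nonzero vector of F^4 lies in some member of S. -/

import Mathlib

/-- The Plücker vector of a pair of vectors of `F^4`. -/
def plucker {F : Type*} [Field F] (a b : Fin 4 → F) : Fin 6 → F :=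
  ![a 0 * b 1 - a 1 * b 0, a 0 * b 2 - a 2 * b 0, a 0 * b 3 - a 3 * b 0,
    a 1 * b 2 - a 2 * b 1, a 1 * b 3 - a 3 * b 1, a 2 * b 3 - a 3 * b 2]

/-- The Klein quadratic form on `F^6`. -/
def kleinQ {F : Type*} [Field F] (x : Fin 6 → F) : F :=
  x 0 * x 5 - x 1 * x 4 + x 2 * x 3

/-- The polar bilinear form of the Klein quadratic form. -/
def kleinB {F : Type*} [Field F] (x y : Fin 6 → F) : F :=
  x 0 * y 5 + x 5 * y 0 - x 1 * y 4 - x 4 * y 1 + x 2 * y 3 + x 3 * y 2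

section Aux

variable {F : Type*} [Field F]

/-- `kleinB l (plucker a b)` written out explicitly. -/
lemma kleinB_plucker' (l : Fin 6 → F) (a b : Fin 4 → F) :
    kleinB l (plucker a b) = l 0 * (a 2 * b 3 - a 3 * b 2) + l 5 * (a 0 * b 1 - a 1 * b 0)
      - l 1 * (a 1 * b 3 - a 3 * b 1) - l 4 * (a 0 * b 2 - a 2 * b 0)
      + l 2 * (a 1 * b 2 - a 2 * b 1) + l 3 * (a 0 * b 3 - a 3 * b 0) := rfl

lemma kleinB_symm (x y : Fin 6 → F) : kleinB x y = kleinB y x := by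
  unfold kleinB; ring

/-- An explicit determinant polynomial for four vectors of `F^4`. -/
def detP (x b c d : Fin 4 → F) : F :=
  x 0 * (b 1 * (c 2 * d 3 - c 3 * d 2) - b 2 * (c 1 * d 3 - c 3 * d 1)
      + b 3 * (c 1 * d 2 - c 2 * d 1))
    - x 1 * (b 0 * (c 2 * d 3 - c 3 * d 2) - b 2 * (c 0 * d 3 - c 3 * d 0)
      + b 3 * (c 0 * d 2 - c 2 * d 0))
    + x 2 * (b 0 * (c 1 * d 3 - c 3 * d 1) - b 1 * (c 0 * d 3 - c 3 * d 0)
      + b 3 * (c 0 * d 1 - c 1 * d 0))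
    - x 3 * (b 0 * (c 1 * d 2 - c 2 * d 1) - b 1 * (c 0 * d 2 - c 2 * d 0)
      + b 2 * (c 0 * d 1 - c 1 * d 0))

lemma detP_eq_det (x b c d : Fin 4 → F) :
    detP x b c d = (Matrix.of ![d, c, b, x]).det := by
  rw [Matrix.det_succ_row_zero]
  simp [Fin.sum_univ_succ, Matrix.det_fin_three, Fin.succAbove,
    Matrix.submatrix_apply,
    show Fin.succ (2:Fin 3) = (3:Fin 4) from rfl, show Fin.castSucc (2:Fin 3) = (2:Fin 4) from rfl]
  unfold detP; ring

/-- The key polynomial identity relating the Klein form, its polar form and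
Plücker vectors of lines through a common point. -/
lemma star_identity (l : Fin 6 → F) (x b c d : Fin 4 → F) :
    kleinB l (plucker x b) * kleinB l (plucker c d)
      - kleinB l (plucker x c) * kleinB l (plucker b d)
      + kleinB l (plucker x d) * kleinB l (plucker b c)
      = detP x b c d * kleinQ l := by
  simp only [kleinB_plucker', kleinQ, detP]
  ring

lemma kleinB_plucker_comb (p : Fin 6 → F) (α β γ δ : F) (a b : Fin 4 → F) :
    kleinB p (plucker (α • a + β • b) (γ • a + δ • b))
      = (α * δ - β * γ) * kleinB p (plucker a b) := by
  simp only [kleinB_plucker', Pi.add_apply, Pi.smul_apply, smul_eq_mul]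
  ring

/-- `kleinB · v` as a linear map. -/
def kleinBL (v : Fin 6 → F) : (Fin 6 → F) →ₗ[F] F where
  toFun l := kleinB l v
  map_add' a b := by unfold kleinB; simp [Pi.add_apply]; ring
  map_smul' t a := by unfold kleinB; simp [Pi.smul_apply, smul_eq_mul]; ring

/-- `b ↦ kleinB (plucker x b) v` as a linear map. -/
def kleinBPluckerL (x : Fin 4 → F) (v : Fin 6 → F) : (Fin 4 → F) →ₗ[F] F where
  toFun b := kleinB (plucker x b) v
  map_add' a b := by
    rw [kleinB_symm, kleinB_symm (plucker x a), kleinB_symm (plucker x b)]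
    simp only [kleinB_plucker', Pi.add_apply]
    ring
  map_smul' t a := by
    rw [kleinB_symm, kleinB_symm (plucker x a)]
    simp only [kleinB_plucker', Pi.smul_apply, smul_eq_mul, RingHom.id_apply]
    ring

lemma kleinB_right_comb (p v₁ v₂ : Fin 6 → F) (α β : F) :
    kleinB p (α • v₁ + β • v₂) = α * kleinB p v₁ + β * kleinB p v₂ := by
  unfold kleinB; simp [Pi.add_apply, Pi.smul_apply, smul_eq_mul]; ring

lemma kleinB_smul_left (t : F) (p v : Fin 6 → F) :
    kleinB (t • p) v = t * kleinB p v := by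
  unfold kleinB; simp [Pi.smul_apply, smul_eq_mul]; ring

/-- A two-dimensional subspace is the span of any two linearly independent members. -/
lemma span_pair_eq (W : Submodule F (Fin 4 → F)) (hW : Module.finrank F W = 2)
    (a b : Fin 4 → F) (ha : a ∈ W) (hb : b ∈ W) (hli : LinearIndependent F ![a, b]) :
    Submodule.span F {a, b} = W := by
  have hle : Submodule.span F {a, b} ≤ W := by
    rw [Submodule.span_le]
    rintro y hy
    rcases hy with rfl | rfl
    · exact ha
    · simpa using hb
  have hrange : Set.range ![a, b] = {a, b} := by
    rw [Matrix.range_cons, Matrix.range_cons_empty, Set.singleton_union]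
  have hfr : Module.finrank F (Submodule.span F {a, b}) = 2 := by
    rw [← hrange, finrank_span_eq_card hli]
    simp
  exact Submodule.eq_of_le_of_finrank_le hle (by rw [hW, hfr])

/-- If the Plücker vector of one basis of `W` is perpendicular to `L`, then so is the
Plücker vector of any pair of vectors of `W`. -/
lemma perp_of_mem (L : Submodule F (Fin 6 → F)) (W : Submodule F (Fin 4 → F))
    (hW : Module.finrank F W = 2)
    (a b : Fin 4 → F) (ha : a ∈ W) (hb : b ∈ W) (hli : LinearIndependent F ![a, b])
    (hperp : ∀ v ∈ L, kleinB (plucker a b) v = 0)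
    (u w : Fin 4 → F) (hu : u ∈ W) (hw : w ∈ W) :
    ∀ v ∈ L, kleinB (plucker u w) v = 0 := by
  have hsp := span_pair_eq W hW a b ha hb hli
  rw [← hsp] at hu hw
  obtain ⟨α, β, hu'⟩ := Submodule.mem_span_pair.1 hu
  obtain ⟨γ, δ, hw'⟩ := Submodule.mem_span_pair.1 hw
  intro v hv
  rw [kleinB_symm, ← hu', ← hw', kleinB_plucker_comb]
  rw [kleinB_symm v (plucker a b), hperp v hv, mul_zero]

lemma pair_indep_of_not_mem_span {x b : Fin 4 → F} (hx : x ≠ 0)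
    (hb : b ∉ Submodule.span F {x}) : LinearIndependent F ![x, b] := by
  rw [linearIndependent_fin2]
  constructor
  · simp only [Matrix.cons_val_one, Matrix.head_cons, Matrix.cons_val_zero]
    intro h
    exact hb (h ▸ Submodule.zero_mem _)
  · intro a h
    simp only [Matrix.cons_val_one, Matrix.head_cons, Matrix.cons_val_zero] at h
    have ha : a ≠ 0 := by
      rintro rfl
      rw [zero_smul] at h
      exact hx h.symm
    apply hb
    rw [Submodule.mem_span_singleton]
    exact ⟨a⁻¹, by rw [← h, smul_smul, inv_mul_cancel₀ ha, one_smul]⟩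

end Aux

/-- Let `L` be a 2-dimensional subspace of `F^6` on which the Klein quadratic form does not
vanish at any nonzero vector. Then the set `S` of 2-dimensional subspaces of `F^4` whose
Plücker vectors lie in `L^⊥` is a spread of lines: distinct members of `S` intersect
trivially, and every nonzero vector of `F^4` lies in some member of `S`. -/
theorem spread_of_perp_section {F : Type*} [Field F]
    (L : Submodule F (Fin 6 → F))
    (hL : Module.finrank F L = 2)
    (hq : ∀ v ∈ L, v ≠ 0 → kleinQ v ≠ 0)
    (S : Set (Submodule F (Fin 4 → F)))
    (hS : ∀ W : Submodule F (Fin 4 → F), W ∈ S ↔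
      Module.finrank F W = 2 ∧
        ∃ a b : Fin 4 → F, a ∈ W ∧ b ∈ W ∧ LinearIndependent F ![a, b] ∧
          ∀ v ∈ L, kleinB (plucker a b) v = 0) :
    (∀ W₁ ∈ S, ∀ W₂ ∈ S, W₁ ≠ W₂ → W₁ ⊓ W₂ = ⊥) ∧
      (∀ x : Fin 4 → F, x ≠ 0 → ∃ W ∈ S, x ∈ W) := by
  -- spanning vectors of L
  obtain ⟨v₁, v₂, hv₁, hv₂, hspanL⟩ :
      ∃ v₁ v₂ : Fin 6 → F, v₁ ∈ L ∧ v₂ ∈ L ∧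
        ∀ v ∈ L, ∃ α β : F, v = α • v₁ + β • v₂ := by
    let B := Module.finBasisOfFinrankEq F L hL
    refine ⟨(B 0).1, (B 1).1, (B 0).2, (B 1).2, ?_⟩
    intro v hv
    refine ⟨B.repr ⟨v, hv⟩ 0, B.repr ⟨v, hv⟩ 1, ?_⟩
    have h := B.sum_repr ⟨v, hv⟩
    rw [Fin.sum_univ_two] at h
    have h2 := congrArg (fun w : L => (w : Fin 6 → F)) h
    simp only [Submodule.coe_add, Submodule.coe_smul] at h2
    exact h2.symm
  constructor
  · -- distinct members intersect trivially
    intro W₁ h₁ W₂ h₂ hne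
    by_contra hbot
    obtain ⟨x, hxmem, hx0⟩ := Submodule.exists_mem_ne_zero_of_ne_bot hbot
    obtain ⟨hxW₁, hxW₂⟩ := Submodule.mem_inf.1 hxmem
    obtain ⟨hr₁, a₁, b₁, ha₁, hb₁, hli₁, hp₁⟩ := (hS W₁).1 h₁
    obtain ⟨hr₂, a₂, b₂, ha₂, hb₂, hli₂, hp₂⟩ := (hS W₂).1 h₂
    -- choose b ∈ W₁ outside span{x}
    have hspx : Module.finrank F (Submodule.span F ({x} : Set (Fin 4 → F))) = 1 :=
      finrank_span_singleton hx0
    obtain ⟨b, hbW₁, hbx⟩ : ∃ b ∈ W₁, b ∉ Submodule.span F ({x} : Set (Fin 4 → F)) := by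
      by_contra h
      push_neg at h
      have hle : W₁ ≤ Submodule.span F ({x} : Set (Fin 4 → F)) := h
      have := Submodule.finrank_mono hle
      rw [hr₁, hspx] at this
      omega
    -- choose c ∈ W₂ outside W₁
    obtain ⟨c, hcW₂, hcW₁⟩ : ∃ c ∈ W₂, c ∉ W₁ := by
      by_contra h
      push_neg at h
      have hle : W₂ ≤ W₁ := h
      exact hne (Submodule.eq_of_le_of_finrank_le hle (by rw [hr₁, hr₂])).symm
    -- choose d outside span{c, b, x}
    obtain ⟨d, hd⟩ : ∃ d, d ∉ Submodule.span F ({c, b, x} : Set (Fin 4 → F)) := by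
      by_contra h
      push_neg at h
      have hle : (⊤ : Submodule F (Fin 4 → F)) ≤ Submodule.span F ({c, b, x} : Set _) :=
        fun y _ => h y
      have h4 : Module.finrank F (Fin 4 → F) = 4 := by
        simp [Module.finrank_pi]
      have hcard : Module.finrank F (Submodule.span F ({c, b, x} : Set (Fin 4 → F))) ≤ 3 := by
        classical
        refine (finrank_span_le_card _).trans ?_
        rw [Set.toFinset_insert, Set.toFinset_insert, Set.toFinset_singleton]
        refine (Finset.card_insert_le _ _).trans (Nat.succ_le_succ ?_)
        exact (Finset.card_insert_le _ _).trans (by simp)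
      have := Submodule.finrank_mono hle
      rw [finrank_top, h4] at this
      omega
    -- linear independence of d, c, b, x, hence nonvanishing determinant
    have hli4 : LinearIndependent F ![d, c, b, x] := by
      have h1 : LinearIndependent F ![x] :=
        linearIndependent_unique_iff.2 (by simpa using hx0)
      have h2 : LinearIndependent F ![b, x] := by
        refine h1.fin_cons ?_
        rwa [Matrix.range_cons_empty]
      have h3 : LinearIndependent F ![c, b, x] := by
        refine h2.fin_cons ?_
        intro hc
        apply hcW₁
        have hle : Submodule.span F (Set.range ![b, x]) ≤ W₁ := by
          rw [Submodule.span_le]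
          rintro y hy
          rw [Matrix.range_cons, Matrix.range_cons_empty, Set.singleton_union] at hy
          rcases hy with rfl | rfl
          · exact hbW₁
          · simpa using hxW₁
        exact hle hc
      refine h3.fin_cons ?_
      have hr : Set.range ![c, b, x] = ({c, b, x} : Set (Fin 4 → F)) := by
        rw [Matrix.range_cons, Matrix.range_cons, Matrix.range_cons_empty,
          Set.singleton_union, Set.singleton_union]
      rwa [hr]
    have hdet : detP x b c d ≠ 0 := by
      rw [detP_eq_det]
      have hunit : IsUnit (Matrix.of ![d, c, b, x]) :=
        Matrix.linearIndependent_rows_iff_isUnit.1 hli4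
      exact ((Matrix.isUnit_iff_isUnit_det _).1 hunit).ne_zero
    -- a nonzero vector of L killed by kleinB · (plucker x d)
    let φ : L →ₗ[F] F := (kleinBL (plucker x d)).comp L.subtype
    have hker : LinearMap.ker φ ≠ ⊥ := by
      intro h
      have h1 := LinearMap.finrank_range_add_finrank_ker φ
      rw [h, finrank_bot, hL] at h1
      have h2 : Module.finrank F (LinearMap.range φ) ≤ 1 := by
        simpa [Module.finrank_self] using Submodule.finrank_le (LinearMap.range φ)
      omega
    obtain ⟨l0, hl0ker, hl0ne⟩ := Submodule.exists_mem_ne_zero_of_ne_bot hker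
    set l : Fin 6 → F := (l0 : Fin 6 → F) with hl
    have hlL : l ∈ L := l0.2
    have hlne : l ≠ 0 := by
      intro h
      exact hl0ne (ZeroMemClass.coe_eq_zero.1 h)
    have hzd : kleinB l (plucker x d) = 0 := by
      have := LinearMap.mem_ker.1 hl0ker
      simpa [φ, kleinBL] using this
    have hzb : kleinB l (plucker x b) = 0 := by
      rw [kleinB_symm]
      exact perp_of_mem L W₁ hr₁ a₁ b₁ ha₁ hb₁ hli₁ hp₁ x b hxW₁ hbW₁ l hlL
    have hzc : kleinB l (plucker x c) = 0 := by
      rw [kleinB_symm]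
      exact perp_of_mem L W₂ hr₂ a₂ b₂ ha₂ hb₂ hli₂ hp₂ x c hxW₂ hcW₂ l hlL
    have hstar := star_identity l x b c d
    rw [hzb, hzc, hzd, zero_mul, zero_mul, zero_mul] at hstar
    have hql : kleinQ l = 0 := by
      have hz : detP x b c d * kleinQ l = 0 := by rw [← hstar]; ring
      rcases mul_eq_zero.1 hz with h | h
      · exact absurd h hdet
      · exact h
    exact hq l hlL hlne hql
  · -- every nonzero vector lies in a member of S
    intro x hx0
    let ρ : (Fin 4 → F) →ₗ[F] F × F :=
      (kleinBPluckerL x v₁).prod (kleinBPluckerL x v₂)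
    have hkerrank : 2 ≤ Module.finrank F (LinearMap.ker ρ) := by
      have h1 := LinearMap.finrank_range_add_finrank_ker ρ
      have h4 : Module.finrank F (Fin 4 → F) = 4 := by
        simp [Module.finrank_pi]
      have h2 : Module.finrank F (LinearMap.range ρ) ≤ 2 := by
        have := Submodule.finrank_le (LinearMap.range ρ)
        simpa [Module.finrank_prod, Module.finrank_self] using this
      omega
    have hspx : Module.finrank F (Submodule.span F ({x} : Set (Fin 4 → F))) = 1 :=
      finrank_span_singleton hx0
    obtain ⟨b, hbker, hbx⟩ :
        ∃ b ∈ LinearMap.ker ρ, b ∉ Submodule.span F ({x} : Set (Fin 4 → F)) := by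
      by_contra h
      push_neg at h
      have hle : LinearMap.ker ρ ≤ Submodule.span F ({x} : Set (Fin 4 → F)) := h
      have := Submodule.finrank_mono hle
      rw [hspx] at this
      omega
    have hxb : LinearIndependent F ![x, b] := pair_indep_of_not_mem_span hx0 hbx
    refine ⟨Submodule.span F {x, b}, ?_, Submodule.subset_span (by simp)⟩
    rw [hS]
    have hrange : Set.range ![x, b] = ({x, b} : Set (Fin 4 → F)) := by
      rw [Matrix.range_cons, Matrix.range_cons_empty, Set.singleton_union]
    have hfr : Module.finrank F (Submodule.span F ({x, b} : Set (Fin 4 → F))) = 2 := by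
      rw [← hrange, finrank_span_eq_card hxb]
      simp
    refine ⟨hfr, x, b, Submodule.subset_span (by simp), Submodule.subset_span (by simp),
      hxb, ?_⟩
    intro v hv
    obtain ⟨α, β, rfl⟩ := hspanL v hv
    have hb0 := LinearMap.mem_ker.1 hbker
    have hb1 : kleinB (plucker x b) v₁ = 0 := by
      have := congrArg Prod.fst hb0
      simpa [ρ, kleinBPluckerL] using this
    have hb2 : kleinB (plucker x b) v₂ = 0 := by
      have := congrArg Prod.snd hb0
      simpa [ρ, kleinBPluckerL] using this
    rw [kleinB_right_comb, hb1, hb2, mul_zero, mul_zero, add_zero]
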